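/- Let r ≥ 1 and x_i = π/(2r) + (i-1)π/r for i = 1,…,r, and let A be the r×r matrix with A_{i,k} = sin(k·x_i). Let b = (Aᵀ)⁻¹ p with p = (1,2,…,r)ᵀ. Then (1/2)‖b‖₂² = (2r² + 1)/6, i.e., Σ_{i=1}^r b_i² = (2r²+1)/3. -/

import Mathlib

open Real Finset Matrix

set_option maxHeartbeats 1600000

private lemma sin_step (t a : ℝ) :
    Real.sin (t + 2*a) - Real.sin t = 2 * Real.sin a * Real.cos (t + a) := by
  have h := Real.sin_sq_add_cos_sq a
  rw [Real.sin_add, Real.cos_add, Real.sin_two_mul, Real.cos_two_mul]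
  linear_combination (2 * Real.sin t) * h

private lemma telescope (n : ℕ) (a : ℝ) :
    2 * Real.sin a * ∑ i ∈ Finset.range n, Real.cos ((2*(i:ℝ)+1) * a)
      = Real.sin (2*(n:ℝ)*a) := by
  induction n with
  | zero => simp
  | succ n ih =>
    rw [Finset.sum_range_succ, mul_add, ih]
    have h := sin_step (2*(n:ℝ)*a) a
    push_cast
    have e1 : 2*(n:ℝ)*a + 2*a = 2*((n:ℝ)+1)*a := by ring
    have e2 : 2*(n:ℝ)*a + a = (2*(n:ℝ)+1)*a := by ring
    rw [e1, e2] at h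
    linarith [h]

private lemma cos_sum_zero' (r : ℕ) (hr : 0 < r) (m : ℤ) (hm : m ≠ 0) (hm2 : |m| < 2*(r:ℤ)) :
    ∑ i ∈ Finset.range r, Real.cos ((2*(i:ℝ)+1) * ((m:ℝ) * π / (2*r))) = 0 := by
  have hrR : (r:ℝ) ≠ 0 := Nat.cast_ne_zero.mpr hr.ne'
  have ha : Real.sin ((m:ℝ) * π / (2*r)) ≠ 0 := by
    intro h
    rw [Real.sin_eq_zero_iff] at h
    obtain ⟨n, hn⟩ := h
    have hπ : (π:ℝ) ≠ 0 := Real.pi_ne_zero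
    have : (m:ℝ) = 2*(r:ℝ)*(n:ℝ) := by
      field_simp at hn
      nlinarith [hn, Real.pi_pos]
    have hmn : m = 2*(r:ℤ)*n := by exact_mod_cast this
    rcases eq_or_ne n 0 with rfl | hn0
    · simp [hmn] at hm
    · have : 2*(r:ℤ) ≤ |m| := by
        rw [hmn, abs_mul]
        have : (1:ℤ) ≤ |n| := Int.one_le_abs hn0
        nlinarith [abs_nonneg (2*(r:ℤ)), (by positivity : (0:ℤ) < 2*(r:ℤ)), abs_of_pos (by positivity : (0:ℤ) < 2*(r:ℤ))]
      omega
  have ht := telescope r ((m:ℝ) * π / (2*r))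
  have h0 : Real.sin (2*(r:ℝ)*((m:ℝ)*π/(2*r))) = 0 := by
    have e : 2*(r:ℝ)*((m:ℝ)*π/(2*r)) = (m:ℝ)*π := by field_simp
    rw [e]
    exact Real.sin_int_mul_pi m
  rw [h0] at ht
  have h2 : 2 * Real.sin ((m:ℝ)*π/(2*r)) ≠ 0 := by
    simpa using ha
  exact (mul_eq_zero.mp ht).resolve_left h2

private lemma cos_sum_neg (r : ℕ) :
    ∑ i ∈ Finset.range r, Real.cos ((2*(i:ℝ)+1) * ((2*(r:ℝ)) * π / (2*r))) = -(r:ℝ) := by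
  rcases Nat.eq_zero_or_pos r with rfl | hr
  · simp
  have hrR : (r:ℝ) ≠ 0 := Nat.cast_ne_zero.mpr hr.ne'
  have : ∀ i ∈ Finset.range r, Real.cos ((2*(i:ℝ)+1) * ((2*(r:ℝ)) * π / (2*r))) = -1 := by
    intro i _
    have e : (2*(i:ℝ)+1) * ((2*(r:ℝ)) * π / (2*r)) = π + (i:ℤ) * (2*π) := by
      push_cast; field_simp; ring
    rw [e, Real.cos_add_int_mul_two_pi, Real.cos_pi]
  rw [Finset.sum_congr rfl this]
  simp

private lemma ortho (r : ℕ) (hr : 0 < r) (A : Matrix (Fin r) (Fin r) ℝ)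
    (hA : ∀ i k : Fin r,
      A i k = Real.sin ((((k : ℕ) : ℝ) + 1) * (π / (2 * r) + (i : ℕ) * (π / r))))
    (k l : Fin r) :
    ∑ i, A i k * A i l =
      if k = l then (if (k:ℕ) + 1 = r then (r:ℝ) else (r:ℝ)/2) else 0 := by
  have hrR : (r:ℝ) ≠ 0 := Nat.cast_ne_zero.mpr hr.ne'
  have key : ∀ x y : ℝ, Real.sin x * Real.sin y = (Real.cos (x-y) - Real.cos (x+y))/2 := by
    intro x y; rw [Real.cos_sub, Real.cos_add]; ring
  have hprod : ∀ i : Fin r, A i k * A i l =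
      (Real.cos ((2*((i:ℕ):ℝ)+1) * (((((k:ℕ):ℤ)-((l:ℕ):ℤ)):ℝ) * π / (2*r)))
       - Real.cos ((2*((i:ℕ):ℝ)+1) * (((((k:ℕ):ℤ)+((l:ℕ):ℤ)+2):ℝ) * π / (2*r))))/2 := by
    intro i
    rw [hA, hA, key]
    have e1 : (((k:ℕ):ℝ)+1) * (π / (2*r) + ((i:ℕ):ℝ) * (π/r))
        - (((l:ℕ):ℝ)+1) * (π / (2*r) + ((i:ℕ):ℝ) * (π/r))
        = (2*((i:ℕ):ℝ)+1) * (((((k:ℕ):ℤ)-((l:ℕ):ℤ)):ℝ) * π / (2*r)) := by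
      push_cast; field_simp; ring
    have e2 : (((k:ℕ):ℝ)+1) * (π / (2*r) + ((i:ℕ):ℝ) * (π/r))
        + (((l:ℕ):ℝ)+1) * (π / (2*r) + ((i:ℕ):ℝ) * (π/r))
        = (2*((i:ℕ):ℝ)+1) * (((((k:ℕ):ℤ)+((l:ℕ):ℤ)+2):ℝ) * π / (2*r)) := by
      push_cast; field_simp; ring
    rw [e1, e2]
  rw [Finset.sum_congr rfl (fun i _ => hprod i)]
  rw [Fin.sum_univ_eq_sum_range (fun i =>
      (Real.cos ((2*(i:ℝ)+1) * (((((k:ℕ):ℤ)-((l:ℕ):ℤ)):ℝ) * π / (2*r)))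
       - Real.cos ((2*(i:ℝ)+1) * (((((k:ℕ):ℤ)+((l:ℕ):ℤ)+2):ℝ) * π / (2*r))))/2) r]
  rw [← Finset.sum_div, Finset.sum_sub_distrib]
  by_cases hkl : k = l
  · subst hkl
    have h1 : ∑ i ∈ Finset.range r,
        Real.cos ((2*(i:ℝ)+1) * (((((k:ℕ):ℤ)-((k:ℕ):ℤ)):ℝ) * π / (2*r))) = (r:ℝ) := by
      simp
    rw [h1, if_pos rfl]
    by_cases hk : (k:ℕ) + 1 = r
    · have hkR : ((k:ℕ):ℝ) + 1 = (r:ℝ) := by exact_mod_cast hk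
      have e : (((((k:ℕ):ℤ)+((k:ℕ):ℤ)+2)):ℝ) = 2*(r:ℝ) := by
        push_cast; linarith
      rw [e, cos_sum_neg r, if_pos hk]
      ring
    · have hlt : (k:ℕ) + 1 < r := lt_of_le_of_ne k.isLt hk
      have h2 : ∑ i ∈ Finset.range r,
          Real.cos ((2*(i:ℝ)+1) * (((((k:ℕ):ℤ)+((k:ℕ):ℤ)+2):ℝ) * π / (2*r))) = 0 := by
        have := cos_sum_zero' r hr (((k:ℕ):ℤ)+((k:ℕ):ℤ)+2) (by positivity)
          (by rw [abs_of_pos (by positivity)]; push_cast; omega)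
        push_cast at this ⊢; exact this
      rw [h2, if_neg hk]
      ring
  · have hkln : (k:ℕ) ≠ (l:ℕ) := fun h => hkl (Fin.ext h)
    have h1 : ∑ i ∈ Finset.range r,
        Real.cos ((2*(i:ℝ)+1) * (((((k:ℕ):ℤ)-((l:ℕ):ℤ)):ℝ) * π / (2*r))) = 0 := by
      have := cos_sum_zero' r hr (((k:ℕ):ℤ)-((l:ℕ):ℤ))
        (by simp only [sub_ne_zero]; exact_mod_cast hkln)
        (by have hk := k.isLt; have hl := l.isLt
            rw [abs_sub_lt_iff]; constructor <;> push_cast <;> omega)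
      push_cast at this ⊢; exact this
    have h2 : ∑ i ∈ Finset.range r,
        Real.cos ((2*(i:ℝ)+1) * (((((k:ℕ):ℤ)+((l:ℕ):ℤ)+2):ℝ) * π / (2*r))) = 0 := by
      have := cos_sum_zero' r hr (((k:ℕ):ℤ)+((l:ℕ):ℤ)+2) (by positivity)
        (by have hk := k.isLt; have hl := l.isLt
            rw [abs_of_pos (by positivity)]; push_cast; omega)
      push_cast at this ⊢; exact this
    rw [h1, h2, if_neg hkl]
    ring

private lemma sumsq (n : ℕ) :
    ∑ j ∈ Finset.range n, ((j:ℝ)+1)^2 = (n:ℝ)*((n:ℝ)+1)*(2*(n:ℝ)+1)/6 := by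
  induction n with
  | zero => simp
  | succ n ih => rw [Finset.sum_range_succ, ih]; push_cast; ring

theorem l2_norm_coeffs_equidistant (r : ℕ) (hr : 0 < r)
    (A : Matrix (Fin r) (Fin r) ℝ)
    (hA : ∀ i k : Fin r,
      A i k = Real.sin ((((k : ℕ) : ℝ) + 1) * (π / (2 * r) + (i : ℕ) * (π / r))))
    (bv : Fin r → ℝ)
    (hb : Aᵀ.mulVec bv = fun k : Fin r => ((k : ℕ) : ℝ) + 1) :
    ∑ i, bv i ^ 2 = (2 * (r : ℝ) ^ 2 + 1) / 3 := by
  have hrR : (r:ℝ) ≠ 0 := Nat.cast_ne_zero.mpr hr.ne'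
  set d : Fin r → ℝ := fun k => if (k:ℕ) + 1 = r then (r:ℝ) else (r:ℝ)/2 with hd
  set c : Fin r → ℝ := fun k => if (k:ℕ) + 1 = r then 1 else 2*(((k:ℕ):ℝ)+1)/r with hc
  have horth : ∀ k l : Fin r, ∑ i, A i k * A i l = if k = l then d k else 0 :=
    fun k l => ortho r hr A hA k l
  have hAtA : Aᵀ * A = Matrix.diagonal d := by
    ext k l
    rw [Matrix.mul_apply, Matrix.diagonal_apply]
    simp only [Matrix.transpose_apply]
    exact horth k l
  have hdne : ∀ k, d k ≠ 0 := by
    intro k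
    by_cases h : (k:ℕ) + 1 = r <;> simp [hd, h, hrR]
  have hdetA : IsUnit A.det := by
    have h1 : IsUnit (A.det * A.det) := by
      have : (Aᵀ * A).det = A.det * A.det := by
        rw [Matrix.det_mul, Matrix.det_transpose]
      rw [← this, hAtA, Matrix.det_diagonal]
      exact isUnit_iff_ne_zero.mpr (Finset.prod_ne_zero_iff.mpr fun k _ => hdne k)
    exact isUnit_of_mul_isUnit_left h1
  have hdetAt : IsUnit Aᵀ := by
    rw [Matrix.isUnit_iff_isUnit_det, Matrix.det_transpose]
    exact hdetA
  have hDc : (Matrix.diagonal d) *ᵥ c = (fun k : Fin r => ((k:ℕ):ℝ)+1) := by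
    funext k
    rw [Matrix.mulVec_diagonal]
    by_cases h : (k:ℕ)+1 = r
    · have : ((k:ℕ):ℝ) + 1 = (r:ℝ) := by exact_mod_cast h
      simp [hd, hc, h, this]
    · simp only [hd, hc, if_neg h]
      field_simp
  have hAc : Aᵀ *ᵥ (A *ᵥ c) = (fun k : Fin r => ((k:ℕ):ℝ)+1) := by
    rw [Matrix.mulVec_mulVec, hAtA, hDc]
  have hbv : bv = A *ᵥ c := by
    apply Matrix.mulVec_injective_iff_isUnit.mpr hdetAt
    rw [hb, hAc]
  rw [hbv]
  have expand : ∑ i, (A *ᵥ c) i ^ 2 = ∑ k, d k * c k ^ 2 := by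
    have e1 : ∀ i, (A *ᵥ c) i ^ 2 = ∑ k, ∑ l, (A i k * A i l) * (c k * c l) := by
      intro i
      rw [Matrix.mulVec, dotProduct, sq, Finset.sum_mul_sum]
      exact Finset.sum_congr rfl fun k _ => Finset.sum_congr rfl fun l _ => by ring
    rw [Finset.sum_congr rfl fun i _ => e1 i]
    rw [Finset.sum_comm]
    refine Finset.sum_congr rfl fun k _ => ?_
    rw [Finset.sum_comm]
    have e2 : ∀ l, ∑ i, (A i k * A i l) * (c k * c l)
        = (if k = l then d k else 0) * (c k * c l) := by
      intro l
      rw [← Finset.sum_mul, horth k l]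
    rw [Finset.sum_congr rfl fun l _ => e2 l]
    simp [ite_mul, Finset.sum_ite_eq, sq]
  rw [expand]
  obtain ⟨n, rfl⟩ : ∃ n, r = n + 1 := ⟨r-1, (Nat.succ_pred_eq_of_pos hr).symm⟩
  rw [Fin.sum_univ_castSucc]
  have hlast : d (Fin.last n) * c (Fin.last n) ^ 2 = ((n:ℝ)+1) := by
    simp [hd, hc, Fin.val_last]
  have hmid : ∀ k : Fin n, d k.castSucc * c k.castSucc ^ 2
      = (2/((n:ℝ)+1)) * (((k:ℕ):ℝ)+1)^2 := by
    intro k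
    have hk : (k.castSucc : ℕ) + 1 ≠ n + 1 := by
      have := k.isLt; simp [Fin.coe_castSucc]; omega
    simp only [hd, hc, if_neg hk, Fin.coe_castSucc]
    have hn1 : ((n:ℝ)+1) ≠ 0 := by positivity
    push_cast
    field_simp
  rw [hlast, Finset.sum_congr rfl fun k _ => hmid k]
  rw [← Finset.mul_sum, Fin.sum_univ_eq_sum_range (fun j => ((j:ℝ)+1)^2) n, sumsq n]
  have hn1 : ((n:ℝ)+1) ≠ 0 := by positivity
  push_cast
  field_simp
  ring
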